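/- Let u : ℝ³ → ℝ be defined by u(x, y, t) = (x² + y²)eᵗ + (1/4)e^{−t} − eᵗ. Then at every point p ∈ ℝ³, the Hessian matrix D²u(p) satisfies trace(D²u(p)) > 0 and σ₂(D²u(p)) = 1; in particular D²u(p) lies in Γ₂⁺, the connected component of the set of symmetric 3×3 real matrices M with σ₂(M) > 0 that contains the identity matrix. -/

import Mathlib

/-- The `k`-th elementary symmetric function of a square real matrix:
the sum of its `k × k` principal minors. -/
noncomputable def sigmaK {ι : Type*} [Fintype ι] [DecidableEq ι] (k : ℕ)
    (A : Matrix ι ι ℝ) : ℝ :=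
  ∑ s ∈ (Finset.univ : Finset ι).powersetCard k,
    Matrix.det (fun i j : {x : ι // x ∈ s} => A i.1 j.1)

/-- The Hessian matrix of `u` at `x`, with entries `∂ᵢ∂ⱼ u (x)`. -/
noncomputable def hessian {ι : Type*} [Fintype ι] [DecidableEq ι]
    (u : (ι → ℝ) → ℝ) (x : ι → ℝ) : Matrix ι ι ℝ :=
  fun i j => fderiv ℝ (fun y => fderiv ℝ u y (Pi.single j 1)) x (Pi.single i 1)

open Real

section Aux

def aux_e01 : Fin 2 ≃ {x : Fin 3 // x ∈ ({0,1} : Finset (Fin 3))} where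
  toFun := ![⟨0, by decide⟩, ⟨1, by decide⟩]
  invFun x := if x.1 = 0 then 0 else 1
  left_inv := by decide
  right_inv := by decide

def aux_e02 : Fin 2 ≃ {x : Fin 3 // x ∈ ({0,2} : Finset (Fin 3))} where
  toFun := ![⟨0, by decide⟩, ⟨2, by decide⟩]
  invFun x := if x.1 = 0 then 0 else 1
  left_inv := by decide
  right_inv := by decide

def aux_e12 : Fin 2 ≃ {x : Fin 3 // x ∈ ({1,2} : Finset (Fin 3))} where
  toFun := ![⟨1, by decide⟩, ⟨2, by decide⟩]
  invFun x := if x.1 = 1 then 0 else 1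
  left_inv := by decide
  right_inv := by decide

lemma aux_det_sub {s : Finset (Fin 3)} (e : Fin 2 ≃ {x : Fin 3 // x ∈ s})
    (A : Matrix (Fin 3) (Fin 3) ℝ) :
    Matrix.det (fun i j : {x : Fin 3 // x ∈ s} => A i.1 j.1) =
      A (e 0).1 (e 0).1 * A (e 1).1 (e 1).1 - A (e 0).1 (e 1).1 * A (e 1).1 (e 0).1 := by
  rw [← Matrix.det_submatrix_equiv_self e (fun i j : {x : Fin 3 // x ∈ s} => A i.1 j.1),
    Matrix.det_fin_two]
  rfl

lemma sigmaK_two (A : Matrix (Fin 3) (Fin 3) ℝ) :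
    sigmaK 2 A = (A 0 0 * A 1 1 - A 0 1 * A 1 0)
      + (A 0 0 * A 2 2 - A 0 2 * A 2 0)
      + (A 1 1 * A 2 2 - A 1 2 * A 2 1) := by
  have hp : (Finset.univ : Finset (Fin 3)).powersetCard 2 =
      {({0,1} : Finset (Fin 3)), {0,2}, {1,2}} := by decide
  rw [sigmaK, hp, Finset.sum_insert (by decide), Finset.sum_insert (by decide),
    Finset.sum_singleton, aux_det_sub aux_e01, aux_det_sub aux_e02, aux_det_sub aux_e12]
  norm_num [aux_e01, aux_e02, aux_e12]
  ring

/-- The explicit Hessian of `u`. -/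
noncomputable def Hmat (p : Fin 3 → ℝ) : Matrix (Fin 3) (Fin 3) ℝ :=
  !![2 * exp (p 2), 0, 2 * p 0 * exp (p 2);
     0, 2 * exp (p 2), 2 * p 1 * exp (p 2);
     2 * p 0 * exp (p 2), 2 * p 1 * exp (p 2),
       (p 0 ^ 2 + p 1 ^ 2) * exp (p 2) + (1/4) * exp (-(p 2)) - exp (p 2)]

lemma sigma2_Hmat (p : Fin 3 → ℝ) : sigmaK 2 (Hmat p) = 1 := by
  rw [sigmaK_two]
  simp only [Hmat, Matrix.cons_val', Matrix.cons_val_zero, Matrix.cons_val_one,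
    Matrix.head_cons, Matrix.empty_val', Matrix.cons_val_fin_one, Matrix.head_fin_const,
    Matrix.cons_val_two, Matrix.tail_cons, Matrix.of_apply]
  rw [Real.exp_neg]
  have h := Real.exp_ne_zero (p 2)
  field_simp
  ring

lemma trace_Hmat (p : Fin 3 → ℝ) : 0 < Matrix.trace (Hmat p) := by
  simp [Matrix.trace, Matrix.diag, Fin.sum_univ_three, Hmat]
  nlinarith [Real.exp_pos (p 2), Real.exp_pos (-(p 2)),
    mul_nonneg (add_nonneg (sq_nonneg (p 0)) (sq_nonneg (p 1))) (Real.exp_pos (p 2)).le]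

lemma fderiv_u_apply (y : Fin 3 → ℝ) (j : Fin 3) :
    fderiv ℝ (fun v : Fin 3 → ℝ => (v 0 ^ 2 + v 1 ^ 2) * Real.exp (v 2)
      + (1 / 4) * Real.exp (-(v 2)) - Real.exp (v 2)) y (Pi.single j 1) =
    ![2 * y 0 * exp (y 2), 2 * y 1 * exp (y 2),
      (y 0 ^ 2 + y 1 ^ 2) * exp (y 2) - (1/4) * exp (-(y 2)) - exp (y 2)] j := by
  have hfe : (fun v : Fin 3 → ℝ => (v 0 ^ 2 + v 1 ^ 2) * Real.exp (v 2)
      + (1 / 4) * Real.exp (-(v 2)) - Real.exp (v 2))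
      = (fun v : Fin 3 → ℝ => (v 0 * v 0 + v 1 * v 1) * Real.exp (v 2)
      + (1 / 4) * Real.exp (-(v 2)) - Real.exp (v 2)) := by
    funext v; ring
  rw [hfe]
  have h0 : HasFDerivAt (fun v : Fin 3 → ℝ => v 0)
      (ContinuousLinearMap.proj (R := ℝ) (φ := fun _ : Fin 3 => ℝ) 0) y :=
    hasFDerivAt_apply 0 y
  have h1 : HasFDerivAt (fun v : Fin 3 → ℝ => v 1)
      (ContinuousLinearMap.proj (R := ℝ) (φ := fun _ : Fin 3 => ℝ) 1) y :=
    hasFDerivAt_apply 1 y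
  have h2 : HasFDerivAt (fun v : Fin 3 → ℝ => v 2)
      (ContinuousLinearMap.proj (R := ℝ) (φ := fun _ : Fin 3 => ℝ) 2) y :=
    hasFDerivAt_apply 2 y
  have he := h2.exp
  have hen := h2.neg.exp
  have hD := ((((h0.mul h0).add (h1.mul h1)).mul he).add (hen.const_mul (1/4))).sub he
  rw [HasFDerivAt.fderiv (f := fun v : Fin 3 → ℝ => (v 0 * v 0 + v 1 * v 1) * Real.exp (v 2)
        + (1 / 4) * Real.exp (-(v 2)) - Real.exp (v 2)) hD]
  fin_cases j <;>
    simp [Pi.single_apply, Fin.isValue] <;> ring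

lemma fderiv_g0 (y : Fin 3 → ℝ) (i : Fin 3) :
    fderiv ℝ (fun v : Fin 3 → ℝ => 2 * v 0 * exp (v 2)) y (Pi.single i 1) = Hmat y i 0 := by
  have h0 : HasFDerivAt (fun v : Fin 3 → ℝ => v 0)
      (ContinuousLinearMap.proj (R := ℝ) (φ := fun _ : Fin 3 => ℝ) 0) y :=
    hasFDerivAt_apply 0 y
  have h2 : HasFDerivAt (fun v : Fin 3 → ℝ => v 2)
      (ContinuousLinearMap.proj (R := ℝ) (φ := fun _ : Fin 3 => ℝ) 2) y :=
    hasFDerivAt_apply 2 y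
  have hD := (h0.const_mul 2).mul h2.exp
  rw [HasFDerivAt.fderiv (f := fun v : Fin 3 → ℝ => 2 * v 0 * exp (v 2)) hD]
  fin_cases i <;> simp [Pi.single_apply, Hmat] <;> ring

lemma fderiv_g1 (y : Fin 3 → ℝ) (i : Fin 3) :
    fderiv ℝ (fun v : Fin 3 → ℝ => 2 * v 1 * exp (v 2)) y (Pi.single i 1) = Hmat y i 1 := by
  have h1 : HasFDerivAt (fun v : Fin 3 → ℝ => v 1)
      (ContinuousLinearMap.proj (R := ℝ) (φ := fun _ : Fin 3 => ℝ) 1) y :=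
    hasFDerivAt_apply 1 y
  have h2 : HasFDerivAt (fun v : Fin 3 → ℝ => v 2)
      (ContinuousLinearMap.proj (R := ℝ) (φ := fun _ : Fin 3 => ℝ) 2) y :=
    hasFDerivAt_apply 2 y
  have hD := (h1.const_mul 2).mul h2.exp
  rw [HasFDerivAt.fderiv (f := fun v : Fin 3 → ℝ => 2 * v 1 * exp (v 2)) hD]
  fin_cases i <;> simp [Pi.single_apply, Hmat] <;> ring

lemma fderiv_g2 (y : Fin 3 → ℝ) (i : Fin 3) :
    fderiv ℝ (fun v : Fin 3 → ℝ => (v 0 ^ 2 + v 1 ^ 2) * exp (v 2)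
      - (1/4) * exp (-(v 2)) - exp (v 2)) y (Pi.single i 1) = Hmat y i 2 := by
  have hfe : (fun v : Fin 3 → ℝ => (v 0 ^ 2 + v 1 ^ 2) * exp (v 2)
      - (1/4) * exp (-(v 2)) - exp (v 2))
      = (fun v : Fin 3 → ℝ => (v 0 * v 0 + v 1 * v 1) * exp (v 2)
      - (1/4) * exp (-(v 2)) - exp (v 2)) := by
    funext v; ring
  rw [hfe]
  have h0 : HasFDerivAt (fun v : Fin 3 → ℝ => v 0)
      (ContinuousLinearMap.proj (R := ℝ) (φ := fun _ : Fin 3 => ℝ) 0) y :=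
    hasFDerivAt_apply 0 y
  have h1 : HasFDerivAt (fun v : Fin 3 → ℝ => v 1)
      (ContinuousLinearMap.proj (R := ℝ) (φ := fun _ : Fin 3 => ℝ) 1) y :=
    hasFDerivAt_apply 1 y
  have h2 : HasFDerivAt (fun v : Fin 3 → ℝ => v 2)
      (ContinuousLinearMap.proj (R := ℝ) (φ := fun _ : Fin 3 => ℝ) 2) y :=
    hasFDerivAt_apply 2 y
  have hD := ((((h0.mul h0).add (h1.mul h1)).mul h2.exp).sub
    (h2.neg.exp.const_mul (1/4))).sub h2.exp
  rw [HasFDerivAt.fderiv (f := fun v : Fin 3 → ℝ => (v 0 * v 0 + v 1 * v 1) * exp (v 2)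
        - (1/4) * exp (-(v 2)) - exp (v 2)) hD]
  fin_cases i <;> simp [Pi.single_apply, Hmat] <;> ring

lemma hessian_eq (p : Fin 3 → ℝ) :
    hessian (fun v : Fin 3 → ℝ => (v 0 ^ 2 + v 1 ^ 2) * Real.exp (v 2)
      + (1 / 4) * Real.exp (-(v 2)) - Real.exp (v 2)) p = Hmat p := by
  ext i j
  show fderiv ℝ (fun y => fderiv ℝ _ y (Pi.single j 1)) p (Pi.single i 1) = _
  have hrw : (fun y => fderiv ℝ (fun v : Fin 3 → ℝ => (v 0 ^ 2 + v 1 ^ 2) * Real.exp (v 2)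
      + (1 / 4) * Real.exp (-(v 2)) - Real.exp (v 2)) y (Pi.single j 1))
      = fun y => ![2 * y 0 * exp (y 2), 2 * y 1 * exp (y 2),
      (y 0 ^ 2 + y 1 ^ 2) * exp (y 2) - (1/4) * exp (-(y 2)) - exp (y 2)] j :=
    funext fun y => fderiv_u_apply y j
  rw [hrw]
  fin_cases j
  · simp only [Matrix.cons_val_zero]
    exact fderiv_g0 p i
  · simp only [Matrix.cons_val_one, Matrix.head_cons]
    exact fderiv_g1 p i
  · simp only [Matrix.cons_val_two, Matrix.tail_cons, Matrix.head_cons]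
    exact fderiv_g2 p i

noncomputable def fpath (p : Fin 3 → ℝ) (s : ℝ) : Matrix (Fin 3) (Fin 3) ℝ :=
  Hmat (fun i => max s 0 * p i)
    + (min s 0) • (!![1,0,0;0,1,0;0,0,-(7/4)] : Matrix (Fin 3) (Fin 3) ℝ)

lemma fpath_cont (p : Fin 3 → ℝ) : Continuous (fpath p) := by
  apply continuous_matrix
  intro i j
  fin_cases i <;> fin_cases j <;>
    simp [fpath, Hmat, Matrix.add_apply, Matrix.smul_apply] <;> fun_prop

lemma fpath_neg_one (p : Fin 3 → ℝ) : fpath p (-1) = 1 := by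
  ext i j
  fin_cases i <;> fin_cases j <;>
    norm_num [fpath, Hmat, Matrix.add_apply, Matrix.smul_apply, Matrix.one_apply, Fin.ext_iff]

lemma fpath_one (p : Fin 3 → ℝ) : fpath p 1 = Hmat p := by
  have h1 : (fun i => max (1:ℝ) 0 * p i) = p := by funext i; norm_num
  rw [fpath, h1]
  norm_num

lemma fpath_symm (p : Fin 3 → ℝ) (s : ℝ) : (fpath p s).IsSymm := by
  rw [Matrix.IsSymm]
  ext i j
  fin_cases i <;> fin_cases j <;>
    simp [fpath, Hmat, Matrix.add_apply, Matrix.smul_apply, Matrix.transpose_apply,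
      Matrix.vecHead, Matrix.vecTail]

lemma fpath_sigma2 (p : Fin 3 → ℝ) {s : ℝ} (hs : s ∈ Set.Icc (-1 : ℝ) 1) :
    0 < sigmaK 2 (fpath p s) := by
  rcases le_total s 0 with h | h
  · have hmax : max s 0 = 0 := max_eq_right h
    have hmin : min s 0 = s := min_eq_left h
    rw [sigmaK_two]
    simp only [fpath, hmax, hmin, Hmat, Matrix.add_apply, Matrix.smul_apply]
    norm_num [Matrix.cons_val', Matrix.cons_val_zero, Matrix.cons_val_one,
      Matrix.head_cons, Matrix.empty_val', Matrix.cons_val_fin_one,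
      Matrix.cons_val_two, Matrix.tail_cons]
    nlinarith [hs.1, h]
  · have hmin : min s 0 = 0 := min_eq_right h
    rw [fpath, hmin, zero_smul, add_zero, sigma2_Hmat]
    norm_num

/-- The Hessian of `u(x, y, t) = (x² + y²)eᵗ + (1/4)e^{−t} − eᵗ` has positive trace and
`σ₂ = 1` everywhere; in particular it lies in `Γ₂⁺`, the connected component of
`{M symmetric : σ₂(M) > 0}` containing the identity. -/
theorem explicit_solution_hessian_in_gamma2 (u : (Fin 3 → ℝ) → ℝ)
    (hu : u = fun v => (v 0 ^ 2 + v 1 ^ 2) * Real.exp (v 2)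
      + (1 / 4) * Real.exp (-(v 2)) - Real.exp (v 2)) :
    ∀ p : Fin 3 → ℝ,
      0 < Matrix.trace (hessian u p) ∧
      sigmaK 2 (hessian u p) = 1 ∧
      hessian u p ∈ connectedComponentIn
        {M : Matrix (Fin 3) (Fin 3) ℝ | M.IsSymm ∧ 0 < sigmaK 2 M} 1 := by
  intro p
  have hH : hessian u p = Hmat p := by rw [hu]; exact hessian_eq p
  rw [hH]
  refine ⟨trace_Hmat p, sigma2_Hmat p, ?_⟩
  have hpre : IsPreconnected (fpath p '' Set.Icc (-1 : ℝ) 1) :=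
    isPreconnected_Icc.image _ (fpath_cont p).continuousOn
  have hsub : fpath p '' Set.Icc (-1 : ℝ) 1 ⊆
      {M : Matrix (Fin 3) (Fin 3) ℝ | M.IsSymm ∧ 0 < sigmaK 2 M} := by
    rintro _ ⟨s, hs, rfl⟩
    exact ⟨fpath_symm p s, fpath_sigma2 p hs⟩
  have hone : (1 : Matrix (Fin 3) (Fin 3) ℝ) ∈ fpath p '' Set.Icc (-1 : ℝ) 1 :=
    ⟨-1, by norm_num, fpath_neg_one p⟩
  exact hpre.subset_connectedComponentIn hone hsub ⟨1, by norm_num, fpath_one p⟩
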